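/- arXiv:2202.01666 — 2 statements merged into one kernel-verified Lean document; each statement's English description precedes it below -/
import Mathlib

section
/- For M > 0 and positive weights pᵢ summing to 1, the convex conjugate of A(f) = M − ∏ᵢ (M − fᵢ)^{pᵢ} on {f : f ≤ M·1} is A*(λ) = M(∑ᵢ λᵢ − 1) if λ ≥ 0 and ∏ᵢ (λᵢ/pᵢ)^{pᵢ} ≥ 1, and +∞ otherwise. -/
/-- Convex conjugate of PropFair's generalized mean `A(f) = M − ∏ i, (M − f i) ^ (p i)`
on `{f : f ≤ M·1}`: the supremum of `⟨λ, f⟩ − A(f)` equals `M (∑ i, λ i − 1)`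
(attained) if `λ ≥ 0` and `∏ i, (λ i / p i) ^ (p i) ≥ 1`, and is `+∞` (unbounded
above) otherwise. -/
theorem conjugate_of_propfair_mean
    (n : ℕ) (M : ℝ) (hM : 0 < M)
    (p : Fin n → ℝ) (hp : ∀ i, 0 < p i) (hpsum : ∑ i, p i = 1)
    (l : Fin n → ℝ) :
    (((∀ i, 0 ≤ l i) ∧ 1 ≤ ∏ i, (l i / p i) ^ (p i)) →
      IsGreatest (Set.range fun f : {f : Fin n → ℝ // ∀ i, f i ≤ M} =>
          ∑ i, l i * f.1 i - (M - ∏ i, (M - f.1 i) ^ (p i)))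
        (M * (∑ i, l i - 1))) ∧
    (¬ ((∀ i, 0 ≤ l i) ∧ 1 ≤ ∏ i, (l i / p i) ^ (p i)) →
      ¬ BddAbove (Set.range fun f : {f : Fin n → ℝ // ∀ i, f i ≤ M} =>
          ∑ i, l i * f.1 i - (M - ∏ i, (M - f.1 i) ^ (p i)))) := by
  have hn : n ≠ 0 := by rintro rfl; simp at hpsum
  obtain ⟨i0⟩ : Nonempty (Fin n) := Fin.pos_iff_nonempty.mp (Nat.pos_of_ne_zero hn)
  constructor
  · rintro ⟨hl, hprod⟩
    constructor
    · refine ⟨⟨fun _ => M, fun i => le_rfl⟩, ?_⟩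
      have h0 : (∏ i, (M - M) ^ (p i)) = 0 :=
        Finset.prod_eq_zero (Finset.mem_univ i0)
          (by rw [sub_self]; exact Real.zero_rpow (hp i0).ne')
      simp only [h0, ← Finset.sum_mul]
      ring
    · rintro x ⟨f, rfl⟩
      simp only
      set g : Fin n → ℝ := fun i => M - f.1 i with hgdef
      have hg0 : ∀ i, 0 ≤ g i := fun i => sub_nonneg.mpr (f.2 i)
      have key : ∏ i, g i ^ p i ≤ ∑ i, l i * g i := by
        have amgm := Real.geom_mean_le_arith_mean_weighted Finset.univ p
          (fun i => l i * g i / p i) (fun i _ => (hp i).le) hpsum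
          (fun i _ => div_nonneg (mul_nonneg (hl i) (hg0 i)) (hp i).le)
        have h1 : ∀ i, (l i * g i / p i) ^ p i = (l i / p i) ^ p i * g i ^ p i := by
          intro i
          rw [← Real.mul_rpow (div_nonneg (hl i) (hp i).le) (hg0 i)]
          congr 1
          field_simp
        have h2 : ∏ i, (l i * g i / p i) ^ p i
            = (∏ i, (l i / p i) ^ p i) * ∏ i, g i ^ p i := by
          simp_rw [h1]; rw [Finset.prod_mul_distrib]
        have h3 : ∀ i, p i * (l i * g i / p i) = l i * g i := by
          intro i; rw [mul_comm]; exact div_mul_cancel₀ _ (hp i).ne'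
        calc ∏ i, g i ^ p i
            ≤ (∏ i, (l i / p i) ^ p i) * ∏ i, g i ^ p i :=
              le_mul_of_one_le_left
                (Finset.prod_nonneg fun i _ => Real.rpow_nonneg (hg0 i) _) hprod
          _ = ∏ i, (l i * g i / p i) ^ p i := h2.symm
          _ ≤ ∑ i, p i * (l i * g i / p i) := amgm
          _ = ∑ i, l i * g i := by simp_rw [h3]
      have hsum : ∑ i, l i * f.1 i + ∑ i, l i * g i = (∑ i, l i) * M := by
        rw [← Finset.sum_add_distrib, Finset.sum_mul]
        refine Finset.sum_congr rfl fun i _ => ?_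
        simp only [hgdef]; ring
      have hPP : ∏ i, (M - f.1 i) ^ p i = ∏ i, g i ^ p i := rfl
      have hexp : M * (∑ i, l i - 1) = (∑ i, l i) * M - M := by ring
      rw [hexp, hPP]
      linarith [key, hsum]
  · intro hneg
    rw [not_bddAbove_iff]
    intro B
    by_cases hl : ∀ i, 0 ≤ l i
    · -- all nonneg, so the product condition fails
      have hprodlt : (∏ i, (l i / p i) ^ (p i)) < 1 :=
        lt_of_not_ge fun h => hneg ⟨hl, h⟩
      by_cases hz : ∃ j, l j = 0
      · obtain ⟨j, hj⟩ := hz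
        set C : ℝ := (∑ i, l i) * (M - 1) with hC
        set K : ℝ := max 1 (B - C + M + 1) with hKdef
        have hK1 : (1:ℝ) ≤ K := le_max_left _ _
        have hK2 : B - C + M + 1 ≤ K := le_max_right _ _
        set t : ℝ := K ^ (p j)⁻¹ with htdef
        have ht0 : 0 ≤ t := Real.rpow_nonneg (by linarith) _
        refine ⟨_, ⟨⟨fun i => if i = j then M - t else M - 1,
          fun i => by dsimp only; split <;> linarith⟩, rfl⟩, ?_⟩
        simp only
        have hsum : ∑ i, l i * (if i = j then M - t else M - 1) = C := by
          rw [hC, Finset.sum_mul]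
          refine Finset.sum_congr rfl fun i _ => ?_
          by_cases h : i = j
          · subst h; rw [hj]; simp
          · simp [h]
        have hbase : ∀ i, M - (if i = j then M - t else M - 1)
            = (if i = j then t else 1) := by
          intro i; split <;> ring
        have hprodeq : ∏ i, (M - (if i = j then M - t else M - 1)) ^ p i = K := by
          simp_rw [hbase]
          have h1 : ∀ i, ((if i = j then t else (1:ℝ)) ^ p i)
              = (if i = j then K else 1) := by
            intro i
            by_cases h : i = j
            · subst h
              simp only [if_pos rfl, htdef]
              exact Real.rpow_inv_rpow (by linarith) (hp i).ne'
            · simp [h, Real.one_rpow]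
          simp_rw [h1]
          rw [Finset.prod_ite_eq' Finset.univ j (fun _ => K)]
          simp
        rw [hsum, hprodeq]
        linarith
      · -- all l i > 0
        push_neg at hz
        have hlpos : ∀ i, 0 < l i := fun i => (hl i).lt_of_ne' (hz i)
        set K : ℝ := ∏ i, (l i / p i) ^ (p i) with hKdef
        have hK0 : 0 < K :=
          Finset.prod_pos fun i _ =>
            Real.rpow_pos_of_pos (div_pos (hlpos i) (hp i)) _
        have hKinv : 1 < K⁻¹ := by
          rw [lt_inv_comm₀ one_pos hK0]; simpa using hprodlt
        have hc : 0 < K⁻¹ - 1 := by linarith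
        set t : ℝ := max 1 ((B - ((∑ i, l i) * M - M) + 1) / (K⁻¹ - 1)) with htdef
        have ht1 : (1:ℝ) ≤ t := le_max_left _ _
        have ht0 : 0 < t := by linarith
        have htc : B - ((∑ i, l i) * M - M) + 1 ≤ t * (K⁻¹ - 1) :=
          (div_le_iff₀ hc).mp (le_max_right _ _)
        refine ⟨_, ⟨⟨fun i => M - t * (p i / l i), fun i => by
          dsimp only
          have : 0 ≤ t * (p i / l i) :=
            mul_nonneg ht0.le (div_nonneg (hp i).le (hlpos i).le)
          linarith⟩, rfl⟩, ?_⟩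
        simp only
        have hsum : ∑ i, l i * (M - t * (p i / l i)) = (∑ i, l i) * M - t := by
          have h1 : ∀ i, l i * (M - t * (p i / l i)) = l i * M - t * p i := by
            intro i
            have h0 : l i * (t * (p i / l i)) = t * p i := by
              field_simp [hz i]
            rw [mul_sub, h0]
          simp_rw [h1]
          rw [Finset.sum_sub_distrib, ← Finset.sum_mul, ← Finset.mul_sum, hpsum, mul_one]
        have hprodeq : ∏ i, (M - (M - t * (p i / l i))) ^ p i = t * K⁻¹ := by
          have hb : ∀ i, M - (M - t * (p i / l i)) = t * (p i / l i) := by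
            intro i; ring
          simp_rw [hb]
          have h1 : ∀ i, (t * (p i / l i)) ^ p i
              = t ^ p i * ((l i / p i) ^ p i)⁻¹ := by
            intro i
            rw [Real.mul_rpow ht0.le (div_nonneg (hp i).le (hlpos i).le)]
            congr 1
            rw [← Real.inv_rpow (div_nonneg (hlpos i).le (hp i).le), inv_div]
          simp_rw [h1]
          rw [Finset.prod_mul_distrib, Finset.prod_inv_distrib,
            ← Real.rpow_sum_of_pos ht0, hpsum, Real.rpow_one, hKdef]
        rw [hsum, hprodeq]
        have hring : t * (K⁻¹ - 1) = t * K⁻¹ - t := by ring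
        linarith [htc, hring]
    · push_neg at hl
      obtain ⟨j, hj⟩ := hl
      set C : ℝ := (∑ i, l i) * M with hC
      have hlj : 0 < -l j := by linarith
      set t : ℝ := max 0 ((B - (C - M) + 1) / (-l j)) with htdef
      have ht0 : 0 ≤ t := le_max_left _ _
      have htc : B - (C - M) + 1 ≤ t * (-l j) :=
        (div_le_iff₀ hlj).mp (le_max_right _ _)
      refine ⟨_, ⟨⟨fun i => if i = j then M - t else M,
        fun i => by dsimp only; split <;> linarith⟩, rfl⟩, ?_⟩
      simp only
      have hsum : ∑ i, l i * (if i = j then M - t else M) = C - l j * t := by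
        have h1 : ∀ i, l i * (if i = j then M - t else M)
            = l i * M - (if i = j then l j * t else 0) := by
          intro i
          by_cases h : i = j
          · subst h; simp; ring
          · simp [h]
        simp_rw [h1]
        rw [Finset.sum_sub_distrib, Finset.sum_ite_eq' Finset.univ j (fun _ => l j * t),
          ← Finset.sum_mul]
        simp [hC]
      have hprodnn : 0 ≤ ∏ i, (M - (if i = j then M - t else M)) ^ p i := by
        refine Finset.prod_nonneg fun i _ => Real.rpow_nonneg ?_ _
        split <;> linarith
      rw [hsum]
      nlinarith
end

section
/- Let a₀ = 0 and a_j ≤ (1 + 1/K) a_{j−1} + c for j = 1,...,K−1 with K ≥ 1 and c ≥ 0. Then ∑_{j=0}^{K−1} a_j ≤ (e − 2) K² c. -/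
/-- If `a 0 = 0` and `a j ≤ (1 + 1/K) a (j−1) + c` for `j = 1, …, K−1` (with `K ≥ 1`,
`c ≥ 0`), then `∑_{j=0}^{K−1} a j ≤ (e − 2) K² c`. -/
theorem recursive_sequence_sum_bound
    (K : ℕ) (hK : 1 ≤ K) (c : ℝ) (hc : 0 ≤ c) (a : ℕ → ℝ)
    (ha0 : a 0 = 0)
    (hrec : ∀ j, 1 ≤ j → j ≤ K - 1 → a j ≤ (1 + 1 / (K : ℝ)) * a (j - 1) + c) :
    ∑ j ∈ Finset.range K, a j ≤ (Real.exp 1 - 2) * (K : ℝ) ^ 2 * c := by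
  have hKpos : (0:ℝ) < K := by exact_mod_cast hK
  set r : ℝ := 1 + 1 / (K:ℝ) with hr
  have hrK : (K:ℝ) * r = K + 1 := by rw [hr, mul_add, mul_one, mul_one_div_cancel hKpos.ne']
  have hrgt : 1 < r := by
    have : 0 < 1 / (K:ℝ) := by positivity
    rw [hr]; linarith
  have hr1 : 1 ≤ r := le_of_lt hrgt
  have hr0 : 0 ≤ r := by linarith
  have key : ∀ j, j ≤ K - 1 → a j ≤ (K:ℝ) * (r ^ j - 1) * c := by
    intro j
    induction j with
    | zero => intro _; simp [ha0]
    | succ n ih =>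
      intro h
      have hn : n ≤ K - 1 := le_trans (Nat.le_succ n) h
      have h1 := hrec (n+1) (by omega) h
      simp only [Nat.add_sub_cancel] at h1
      have h2 := ih hn
      have hrn : (1:ℝ) ≤ r ^ n := one_le_pow₀ hr1
      calc a (n+1) ≤ r * a n + c := h1
        _ ≤ r * ((K:ℝ) * (r ^ n - 1) * c) + c := by
            have := mul_le_mul_of_nonneg_left h2 hr0
            linarith
        _ = (K:ℝ) * (r ^ (n+1) - 1) * c := by linear_combination (-c) * hrK
  have hsum : ∑ j ∈ Finset.range K, a j ≤ ∑ j ∈ Finset.range K, (K:ℝ) * (r ^ j - 1) * c := by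
    apply Finset.sum_le_sum
    intro j hj
    exact key j (by have := Finset.mem_range.mp hj; omega)
  have hgeom : ∑ j ∈ Finset.range K, r ^ j = (K:ℝ) * (r ^ K - 1) := by
    rw [geom_sum_eq hrgt.ne']
    have : r - 1 = 1 / (K:ℝ) := by simp [hr]
    rw [this]
    field_simp
  have hsum2 : ∑ j ∈ Finset.range K, (K:ℝ) * (r ^ j - 1) * c
      = (K:ℝ)^2 * (r ^ K - 2) * c := by
    have h0 : ∑ j ∈ Finset.range K, ((K:ℝ) * (r ^ j - 1) * c)
        = ∑ j ∈ Finset.range K, ((K:ℝ) * c * r ^ j - (K:ℝ) * c) :=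
      Finset.sum_congr rfl (fun j _ => by ring)
    rw [h0, Finset.sum_sub_distrib, ← Finset.mul_sum, hgeom, Finset.sum_const,
      Finset.card_range, nsmul_eq_mul]
    ring
  have hexp : r ^ K ≤ Real.exp 1 := by
    have h1 : r ≤ Real.exp (1 / (K:ℝ)) := by
      have := Real.add_one_le_exp (1 / (K:ℝ))
      linarith
    calc r ^ K ≤ (Real.exp (1 / (K:ℝ))) ^ K := pow_le_pow_left₀ hr0 h1 K
      _ = Real.exp 1 := by
          rw [← Real.exp_nat_mul]
          congr 1
          field_simp
  calc ∑ j ∈ Finset.range K, a j ≤ (K:ℝ)^2 * (r ^ K - 2) * c := by rw [← hsum2]; exact hsum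
    _ ≤ (Real.exp 1 - 2) * (K:ℝ)^2 * c := by
        nlinarith [mul_nonneg (mul_nonneg (sub_nonneg.mpr hexp) (sq_nonneg (K:ℝ))) hc]
end
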